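/- arXiv:1608.08474 — 2 statements merged into one kernel-verified Lean document; each statement's English description precedes it below -/
import Mathlib

section
/- Let 𝒴 be a finite nonempty set, let q be a pmf on 𝒴 with q(y) > 0 for all y, let N ≥ 1, and let p be any pmf on 𝒴^N. Then D(p ‖ q^{⊗N}) ≤ N · log₂(1/μ_q) · √(2 ln 2) · √(D(q^{⊗N} ‖ p)), where q^{⊗N} denotes the N-fold product pmf of q and μ_q = min_{y∈𝒴} q(y). (Claim established in Appendix B of the paper, showing each encoding block performs resolvability-achieving random number generation; it uses that the minimum mass of q^{⊗N} equals μ_q^N.) -/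
open scoped ENNReal BigOperators

attribute [local instance] Classical.propDecidable

/-- Kullback–Leibler divergence (base 2) between two pmfs on a finite set,
valued in `[0, +∞]`. -/
noncomputable def klDiv {α : Type*} [Fintype α] (p q : α → ℝ) : ℝ≥0∞ :=
  if ∀ x, q x = 0 → p x = 0 then
    ENNReal.ofReal (∑ x, p x * Real.logb 2 (p x / q x))
  else ⊤

/-- A probability mass function on a finite set. -/
def IsPMF {α : Type*} [Fintype α] (p : α → ℝ) : Prop :=
  (∀ x, 0 ≤ p x) ∧ ∑ x, p x = 1

section Aux
open Real Set


private lemma monoAux {f f' : ℝ → ℝ} (hd : ∀ x > (0:ℝ), HasDerivAt f (f' x) x)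
    {D : Set ℝ} (hD : Convex ℝ D) (hsub : D ⊆ Set.Ioi 0)
    (h0 : ∀ x ∈ interior D, 0 ≤ f' x) : MonotoneOn f D := by
  apply monotoneOn_of_deriv_nonneg hD
  · exact fun x hx => ((hd x (hsub hx)).differentiableAt.continuousAt).continuousWithinAt
  · exact fun x hx =>
      (hd x (hsub (interior_subset hx))).differentiableAt.differentiableWithinAt
  · intro x hx
    rw [(hd x (hsub (interior_subset hx))).deriv]
    exact h0 x hx

private lemma antiAux {f f' : ℝ → ℝ} (hd : ∀ x > (0:ℝ), HasDerivAt f (f' x) x)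
    {D : Set ℝ} (hD : Convex ℝ D) (hsub : D ⊆ Set.Ioi 0)
    (h0 : ∀ x ∈ interior D, f' x ≤ 0) : AntitoneOn f D := by
  apply antitoneOn_of_deriv_nonpos hD
  · exact fun x hx => ((hd x (hsub hx)).differentiableAt.continuousAt).continuousWithinAt
  · exact fun x hx =>
      (hd x (hsub (interior_subset hx))).differentiableAt.differentiableWithinAt
  · intro x hx
    rw [(hd x (hsub (interior_subset hx))).deriv]
    exact h0 x hx

private lemma pade_hasDeriv : ∀ x > (0:ℝ),
    HasDerivAt (fun x : ℝ => Real.log x - 2*(x-1)/(x+1))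
      (x⁻¹ - (2*(x+1) - 2*(x-1)*1)/(x+1)^2) x := by
  intro x hx
  have h1 : HasDerivAt (fun x : ℝ => 2*(x-1)) 2 x := by
    simpa using ((hasDerivAt_id x).sub_const 1).const_mul (2:ℝ)
  have h2 : HasDerivAt (fun x : ℝ => x+1) 1 x := (hasDerivAt_id x).add_const 1
  have h3 := h1.div h2 (by linarith : x + 1 ≠ 0)
  have h4 := (Real.hasDerivAt_log hx.ne').sub h3
  exact h4

private lemma pade_ge {x : ℝ} (hx : 1 ≤ x) : 2*(x-1)/(x+1) ≤ Real.log x := by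
  have hmono := monoAux pade_hasDeriv (convex_Ioi 0) (le_refl _) ?nn
  case nn =>
    intro y hy
    rw [interior_Ioi] at hy
    have hy0 : (0:ℝ) < y := hy
    have h1 : (2*(y+1) - 2*(y-1)*1)/(y+1)^2 ≤ y⁻¹ := by
      rw [div_le_iff₀ (by positivity), inv_mul_eq_div, le_div_iff₀ hy0]
      nlinarith [sq_nonneg (y-1)]
    linarith
  have := hmono (Set.mem_Ioi.mpr one_pos) (Set.mem_Ioi.mpr (by linarith : (0:ℝ) < x)) hx
  simp at this
  linarith

private lemma pade_le {x : ℝ} (hx0 : 0 < x) (hx : x ≤ 1) : Real.log x ≤ 2*(x-1)/(x+1) := by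
  have hmono := monoAux pade_hasDeriv (convex_Ioi 0) (le_refl _) ?nn
  case nn =>
    intro y hy
    rw [interior_Ioi] at hy
    have hy0 : (0:ℝ) < y := hy
    have h1 : (2*(y+1) - 2*(y-1)*1)/(y+1)^2 ≤ y⁻¹ := by
      rw [div_le_iff₀ (by positivity), inv_mul_eq_div, le_div_iff₀ hy0]
      nlinarith [sq_nonneg (y-1)]
    linarith
  have := hmono (Set.mem_Ioi.mpr hx0) (Set.mem_Ioi.mpr one_pos) hx
  simp at this
  linarith

private noncomputable def phiF (x : ℝ) : ℝ := x * Real.log x - x + 1 - 3*(x-1)^2/(2*(x+2))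

private lemma phi_hasDeriv : ∀ x > (0:ℝ),
    HasDerivAt phiF (Real.log x - 3*(x-1)*(x+5)/(2*(x+2)^2)) x := by
  intro x hx
  have hu : HasDerivAt (fun x : ℝ => 3*(x-1)^2) (3*(2*(x-1)^1*1)) x := by
    exact (((hasDerivAt_id x).sub_const 1).pow 2).const_mul 3
  have hv : HasDerivAt (fun x : ℝ => 2*(x+2)) 2 x := by
    simpa using ((hasDerivAt_id x).add_const 2).const_mul (2:ℝ)
  have hq := hu.div hv (by linarith : 2*(x+2) ≠ 0)
  have hm := Real.hasDerivAt_mul_log hx.ne'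
  have h := ((hm.sub (hasDerivAt_id x)).add_const 1).sub hq
  have heq : Real.log x + 1 - 1 + 0 - (3*(2*(x-1)^1*1) * (2*(x+2)) - 3*(x-1)^2*2)/(2*(x+2))^2
      = Real.log x - 3*(x-1)*(x+5)/(2*(x+2)^2) := by
    have h2 : (x+2) ≠ 0 := by linarith
    field_simp
    ring
  have h' : HasDerivAt phiF (Real.log x + 1 - 1 + 0
      - (3*(2*(x-1)^1*1) * (2*(x+2)) - 3*(x-1)^2*2)/(2*(x+2))^2) x := by
    convert h using 1
    · rfl
    · rfl
    · rfl
    · ring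
  rw [heq] at h'
  exact h'

private lemma phi_nonneg {x : ℝ} (hx : 0 < x) : 0 ≤ phiF x := by
  have hphi1 : phiF 1 = 0 := by simp [phiF]
  rcases le_or_gt 1 x with h | h
  · have hmono := monoAux phi_hasDeriv (convex_Ici 1) (fun y hy => Set.mem_Ioi.mpr (lt_of_lt_of_le one_pos hy)) ?nn
    case nn =>
      intro y hy
      rw [interior_Ici] at hy
      have hy1 : (1:ℝ) < y := hy
      have hp := pade_ge hy1.le
      have h2 : 3*(y-1)*(y+5)/(2*(y+2)^2) ≤ 2*(y-1)/(y+1) := by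
        rw [div_le_div_iff₀ (by positivity) (by positivity)]
        nlinarith [sq_nonneg (y-1), hy1]
      linarith
    have := hmono (Set.mem_Ici.mpr le_rfl) (Set.mem_Ici.mpr h) h
    rw [hphi1] at this; exact this
  · have hanti := antiAux phi_hasDeriv (convex_Ioc 0 1) (fun y hy => hy.1) ?np
    case np =>
      intro y hy
      rw [interior_Ioc] at hy
      have hy0 : (0:ℝ) < y := hy.1
      have hy1 : y < 1 := hy.2
      have hp := pade_le hy0 hy1.le
      have h2 : 2*(y-1)/(y+1) ≤ 3*(y-1)*(y+5)/(2*(y+2)^2) := by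
        rw [div_le_div_iff₀ (by positivity) (by positivity)]
        nlinarith [sq_nonneg (y-1), hy1]
      linarith
    have := hanti (Set.mem_Ioc.mpr ⟨hx, h.le⟩) (Set.mem_Ioc.mpr ⟨one_pos, le_rfl⟩) h.le
    rw [hphi1] at this; exact this

private lemma pointwise_pinsker {p q : ℝ} (hp : 0 < p) (hq : 0 ≤ q) :
    3*(q-p)^2/(2*(q+2*p)) ≤ q * Real.log (q/p) - q + p := by
  rcases eq_or_lt_of_le hq with h0 | hq
  · rw [← h0]
    have : 3*((0:ℝ)-p)^2/(2*(0+2*p)) = 3*p/4 := by field_simp; ring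
    rw [this]; simp; linarith
  · have hφ := phi_nonneg (x := q/p) (by positivity)
    have key : q * Real.log (q/p) - q + p - 3*(q-p)^2/(2*(q+2*p)) = p * phiF (q/p) := by
      simp only [phiF]
      field_simp
    nlinarith [mul_nonneg hp.le hφ, key]

private lemma pinsker_sum {α : Type*} [Fintype α] (P Q : α → ℝ)
    (hPsum : ∑ z, P z = 1) (hQ0 : ∀ z, 0 ≤ Q z) (hQsum : ∑ z, Q z = 1)
    (hPpos : ∀ z, 0 < P z) :
    (∑ z, |P z - Q z|)^2 ≤ 2 * ∑ z, Q z * Real.log (Q z / P z) := by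
  have hw : ∀ z, (0:ℝ) < 2/3*(Q z + 2*P z) := by
    intro z; have := hQ0 z; have := hPpos z; nlinarith
  have cs := Finset.sq_sum_div_le_sum_sq_div Finset.univ (fun z => |P z - Q z|)
      (g := fun z => 2/3*(Q z + 2*P z)) (fun z _ => hw z)
  have hwsum : ∑ z, 2/3*(Q z + 2*P z) = 2 := by
    rw [← Finset.mul_sum, Finset.sum_add_distrib, ← Finset.mul_sum, hQsum, hPsum]
    norm_num
  rw [hwsum] at cs
  have hterm : ∀ z, |P z - Q z|^2 / (2/3*(Q z + 2*P z))
      ≤ Q z * Real.log (Q z / P z) - Q z + P z := by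
    intro z
    have hpt := pointwise_pinsker (hPpos z) (hQ0 z)
    have he : |P z - Q z|^2 / (2/3*(Q z + 2*P z)) = 3*(Q z - P z)^2/(2*(Q z + 2*P z)) := by
      rw [sq_abs]
      have hne : Q z + 2*P z ≠ 0 := by nlinarith [hw z]
      field_simp
      ring
    rw [he]; exact hpt
  have hsum2 : ∑ z, (Q z * Real.log (Q z / P z) - Q z + P z)
      = ∑ z, Q z * Real.log (Q z / P z) := by
    rw [Finset.sum_add_distrib, Finset.sum_sub_distrib, hQsum, hPsum]
    ring
  have h3 : ∑ z, |P z - Q z|^2 / (2/3*(Q z + 2*P z)) ≤ ∑ z, Q z * Real.log (Q z / P z) := by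
    rw [← hsum2]; exact Finset.sum_le_sum (fun z _ => hterm z)
  calc (∑ z, |P z - Q z|)^2 ≤ 2 * ∑ z, |P z - Q z|^2 / (2/3*(Q z + 2*P z)) := by
        rw [div_le_iff₀ (by norm_num : (0:ℝ) < 2)] at cs; linarith
    _ ≤ 2 * ∑ z, Q z * Real.log (Q z / P z) := by linarith

private lemma affine_concaveOn {s : Set ℝ} (hs : Convex ℝ s) (a b : ℝ) :
    ConcaveOn ℝ s (fun x => a*x + b) := by
  refine ⟨hs, fun x _ y _ c d hc hd hcd => le_of_eq ?_⟩
  simp only [smul_eq_mul]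
  linear_combination b * hcd

private lemma rev_pinsker_term {m Q P : ℝ} (hm : 0 < m) (hm2 : m ≤ 1/2)
    (hQ : m ≤ Q) (hP0 : 0 ≤ P) (hP1 : P ≤ 1) :
    P * Real.log (P / Q) ≤ (-Real.log m) * |P - Q| + (-Real.log m) * (P - Q) := by
  have hQ0 : 0 < Q := lt_of_lt_of_le hm hQ
  have hL : 0 ≤ -Real.log m := by
    rw [neg_nonneg]; exact Real.log_nonpos hm.le (by linarith)
  set L := -Real.log m with hLdef
  rcases le_or_gt P Q with h | h
  · have habs : |P - Q| = Q - P := by rw [abs_of_nonpos (by linarith)]; ring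
    have hlhs : P * Real.log (P / Q) ≤ 0 :=
      mul_nonpos_of_nonneg_of_nonpos hP0
        (Real.log_nonpos (by positivity) ((div_le_one hQ0).mpr h))
    rw [habs]
    nlinarith
  · have hQ1 : Q < 1 := lt_of_lt_of_le h hP1
    have hm1 : m < 1 := by linarith
    have hlogm : Real.log m = -L := by rw [hLdef]; ring
    -- ψ x = log x + (-(2*L)*x + 2*L), concave on Ioi 0
    have hψcc : ConcaveOn ℝ (Set.Ioi 0) (fun x => Real.log x + ((-(2*L))*x + 2*L)) :=
      ConcaveOn.add (strictConcaveOn_log_Ioi.concaveOn) (affine_concaveOn (convex_Ioi 0) _ _)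
    have hψQ : 0 ≤ Real.log Q + ((-(2*L))*Q + 2*L) := by
      set c := (1-Q)/(1-m) with hc
      set d := (Q-m)/(1-m) with hd
      have hc0 : 0 ≤ c := by apply div_nonneg <;> linarith
      have hd0 : 0 ≤ d := by apply div_nonneg <;> linarith
      have hne : (1:ℝ) - m ≠ 0 := sub_ne_zero_of_ne hm1.ne'
      have hcd : c + d = 1 := by rw [hc, hd]; field_simp; ring
      have happ := hψcc.2 (Set.mem_Ioi.mpr hm) (Set.mem_Ioi.mpr one_pos) hc0 hd0 hcd
      simp only [smul_eq_mul] at happ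
      have hcomb : c*m + d*1 = Q := by rw [hc, hd]; field_simp; ring
      rw [hcomb] at happ
      have hψm : 0 ≤ Real.log m + ((-(2*L))*m + 2*L) := by rw [hlogm]; nlinarith
      have hψ1 : Real.log 1 + ((-(2*L))*1 + 2*L) = 0 := by simp
      nlinarith [happ]
    -- h x = negMulLog x + ((2*L + log Q)*x - 2*L*Q), concave on Ici 0
    have hhcc : ConcaveOn ℝ (Set.Ici 0)
        (fun x => Real.negMulLog x + ((2*L + Real.log Q)*x + (-(2*L*Q)))) :=
      Real.concaveOn_negMulLog.add (affine_concaveOn (convex_Ici 0) _ _)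
    have hhP : 0 ≤ Real.negMulLog P + ((2*L + Real.log Q)*P + (-(2*L*Q))) := by
      set c := (1-P)/(1-Q) with hc
      set d := (P-Q)/(1-Q) with hd
      have hc0 : 0 ≤ c := by apply div_nonneg <;> linarith
      have hd0 : 0 ≤ d := by apply div_nonneg <;> linarith
      have hne : (1:ℝ) - Q ≠ 0 := sub_ne_zero_of_ne hQ1.ne'
      have hcd : c + d = 1 := by rw [hc, hd]; field_simp; ring
      have happ := hhcc.2 (Set.mem_Ici.mpr hQ0.le) (Set.mem_Ici.mpr zero_le_one) hc0 hd0 hcd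
      simp only [smul_eq_mul] at happ
      have hcomb : c*Q + d*1 = P := by rw [hc, hd]; field_simp; ring
      rw [hcomb] at happ
      have hhQ : Real.negMulLog Q + ((2*L + Real.log Q)*Q + (-(2*L*Q))) = 0 := by
        simp [Real.negMulLog]; ring
      have hh1 : Real.negMulLog 1 + ((2*L + Real.log Q)*1 + (-(2*L*Q)))
          = Real.log Q + ((-(2*L))*Q + 2*L) := by
        simp [Real.negMulLog_one]; ring
      rw [hhQ, hh1] at happ
      nlinarith [happ, mul_nonneg hd0 hψQ]
    have hexp : P * Real.log (P / Q) ≤ 2*L*(P-Q) := by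
      rw [Real.log_div (by linarith : P ≠ 0) hQ0.ne']
      simp only [Real.negMulLog] at hhP
      nlinarith [hhP]
    have habs : |P - Q| = P - Q := abs_of_pos (by linarith)
    rw [habs]
    nlinarith

private lemma rev_pinsker_sum {α : Type*} [Fintype α] (P Q : α → ℝ)
    (hP0 : ∀ z, 0 ≤ P z) (hPsum : ∑ z, P z = 1) (hQsum : ∑ z, Q z = 1)
    {m : ℝ} (hm : 0 < m) (hm2 : m ≤ 1/2) (hmQ : ∀ z, m ≤ Q z) :
    ∑ z, P z * Real.log (P z / Q z) ≤ (-Real.log m) * ∑ z, |P z - Q z| := by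
  have hP1 : ∀ z, P z ≤ 1 := by
    intro z
    rw [← hPsum]
    exact Finset.single_le_sum (fun i _ => hP0 i) (Finset.mem_univ z)
  calc ∑ z, P z * Real.log (P z / Q z)
      ≤ ∑ z, ((-Real.log m) * |P z - Q z| + (-Real.log m) * (P z - Q z)) :=
        Finset.sum_le_sum (fun z _ => rev_pinsker_term hm hm2 (hmQ z) (hP0 z) (hP1 z))
    _ = (-Real.log m) * ∑ z, |P z - Q z| := by
        rw [Finset.sum_add_distrib, ← Finset.mul_sum, ← Finset.mul_sum,
          Finset.sum_sub_distrib, hPsum, hQsum]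
        ring

end Aux

/-- Appendix B claim: for any pmf `p` on `𝒴^N` and a positive pmf `q` on `𝒴`,
`D(p‖q^{⊗N}) ≤ N · log₂(1/μ_q) · √(2 ln 2) · √(D(q^{⊗N}‖p))`. -/
theorem klDiv_prod_target_le {𝒴 : Type*} [Fintype 𝒴] [Nonempty 𝒴]
    (q : 𝒴 → ℝ) (hq : IsPMF q) (hqpos : ∀ y, 0 < q y)
    {N : ℕ} (hN : 1 ≤ N) (p : (Fin N → 𝒴) → ℝ) (hp : IsPMF p) :
    klDiv p (fun y => ∏ i, q (y i)) ≤
      ENNReal.ofReal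
          ((N : ℝ) * Real.logb 2 ((Finset.univ.inf' Finset.univ_nonempty q)⁻¹) *
            Real.sqrt (2 * Real.log 2)) *
        (klDiv (fun y => ∏ i, q (y i)) p) ^ (1 / 2 : ℝ) := by
  classical
  set μ := Finset.univ.inf' Finset.univ_nonempty q with hμdef
  set Q : (Fin N → 𝒴) → ℝ := fun y => ∏ i, q (y i) with hQdef
  have hμpos : 0 < μ := by
    rw [hμdef, Finset.lt_inf'_iff]
    exact fun y _ => hqpos y
  have hμle : ∀ y, μ ≤ q y := fun y => Finset.inf'_le _ (Finset.mem_univ y)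
  have hQpos : ∀ z, 0 < Q z := fun z => Finset.prod_pos (fun i _ => hqpos _)
  have hQcond : ∀ x, Q x = 0 → p x = 0 := fun x hx => absurd hx (hQpos x).ne'
  have hQsum : ∑ z, Q z = 1 := by
    have h1 := Finset.prod_univ_sum (fun _ : Fin N => (Finset.univ : Finset 𝒴))
      (fun _ y => q y)
    rw [Fintype.piFinset_univ] at h1
    rw [hQdef, ← h1, hq.2, Finset.prod_const_one]
  by_cases hcard : Fintype.card 𝒴 = 1
  · -- trivial case
    haveI hss : Subsingleton 𝒴 := Fintype.card_le_one_iff_subsingleton.mp hcard.le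
    haveI : Subsingleton (Fin N → 𝒴) := ⟨fun f g => funext fun i => Subsingleton.elim _ _⟩
    have hp1 : ∀ z, p z = 1 := by
      intro z
      have h2 := hp.2
      rwa [Fintype.sum_subsingleton _ z] at h2
    rw [klDiv, if_pos hQcond]
    have hz : ∀ z : Fin N → 𝒴, p z * Real.logb 2 (p z / Q z) = 0 := by
      intro z
      have hQ1 : Q z = 1 := by
        have h2 := hQsum
        rwa [Fintype.sum_subsingleton _ z] at h2
      rw [hp1 z, hQ1]
      norm_num
    rw [Finset.sum_congr rfl (fun z _ => hz z), Finset.sum_const_zero]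
    simp
  · -- card ≥ 2
    have hcard2 : 1 < Fintype.card 𝒴 := lt_of_le_of_ne Fintype.card_pos (Ne.symm hcard)
    obtain ⟨a, b, hab⟩ := Fintype.exists_pair_of_one_lt_card hcard2
    have hμhalf : μ ≤ 1/2 := by
      have hsub : ({a, b} : Finset 𝒴) ⊆ Finset.univ := Finset.subset_univ _
      have h1 : q a + q b ≤ 1 := by
        rw [← hq.2, ← Finset.sum_pair hab]
        exact Finset.sum_le_sum_of_subset_of_nonneg hsub (fun y _ _ => (hqpos y).le)
      have := hμle a; have := hμle b
      linarith
    have hμlt1 : μ < 1 := by linarith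
    have hcpos : (0:ℝ) < (N : ℝ) * Real.logb 2 μ⁻¹ * Real.sqrt (2 * Real.log 2) := by
      have h1 : (0:ℝ) < N := by exact_mod_cast hN
      have h2 : (0:ℝ) < Real.logb 2 μ⁻¹ :=
        Real.logb_pos (by norm_num) ((one_lt_inv₀ hμpos).mpr hμlt1)
      have h3 : (0:ℝ) < Real.sqrt (2 * Real.log 2) :=
        Real.sqrt_pos.mpr (by positivity)
      positivity
    by_cases hzero : ∃ z, p z = 0
    · have hklT : klDiv Q p = ⊤ := by
        rw [klDiv, if_neg]
        push_neg
        obtain ⟨z, hz⟩ := hzero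
        exact ⟨z, hz, (hQpos z).ne'⟩
      rw [hklT, ENNReal.top_rpow_of_pos (by norm_num), ENNReal.mul_top]
      · exact le_top
      · rw [Ne, ENNReal.ofReal_eq_zero, not_le]
        exact hcpos
    · push_neg at hzero
      have hppos : ∀ z, 0 < p z := fun z => lt_of_le_of_ne (hp.1 z) (Ne.symm (hzero z))
      -- key real quantities
      set m := μ ^ N with hmdef
      have hm0 : 0 < m := pow_pos hμpos N
      have hm2 : m ≤ 1/2 := by
        calc m ≤ μ ^ 1 := pow_le_pow_of_le_one hμpos.le (by linarith) hN
          _ = μ := pow_one μ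
          _ ≤ 1/2 := hμhalf
      have hmQ : ∀ z, m ≤ Q z := by
        intro z
        rw [hmdef, hQdef]
        calc μ ^ N = ∏ _i : Fin N, μ := by
              rw [Finset.prod_const, Finset.card_univ, Fintype.card_fin]
          _ ≤ ∏ i, q (z i) := Finset.prod_le_prod (fun _ _ => hμpos.le)
              (fun i _ => hμle (z i))
      set D := ∑ z, p z * Real.log (p z / Q z) with hDdef
      set K := ∑ z, Q z * Real.log (Q z / p z) with hKdef
      set T := ∑ z, |p z - Q z| with hTdef
      have hrev : D ≤ (-Real.log m) * T :=
        rev_pinsker_sum p Q hp.1 hp.2 hQsum hm0 hm2 hmQ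
      have hpin : T^2 ≤ 2 * K := pinsker_sum p Q hp.2 (fun z => (hQpos z).le) hQsum hppos
      have hT0 : 0 ≤ T := Finset.sum_nonneg (fun z _ => abs_nonneg _)
      have hK0 : 0 ≤ K := by nlinarith
      have hL0 : 0 ≤ -Real.log m :=
        neg_nonneg.mpr (Real.log_nonpos hm0.le (by linarith))
      have hTsqrt : T ≤ Real.sqrt (2 * K) := by
        rw [show T = Real.sqrt (T^2) from (Real.sqrt_sq hT0).symm]
        exact Real.sqrt_le_sqrt hpin
      have hDle : D ≤ (-Real.log m) * Real.sqrt (2 * K) := by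
        calc D ≤ (-Real.log m) * T := hrev
          _ ≤ (-Real.log m) * Real.sqrt (2 * K) := by
              exact mul_le_mul_of_nonneg_left hTsqrt hL0
      -- convert to bits
      have hlog2 : (0:ℝ) < Real.log 2 := Real.log_pos (by norm_num)
      have hL : -Real.log m = (N : ℝ) * Real.log μ⁻¹ := by
        rw [hmdef, Real.log_pow, Real.log_inv]
        ring
      have hS : ∑ z, p z * Real.logb 2 (p z / Q z) = D / Real.log 2 := by
        rw [hDdef, Finset.sum_div]
        congr 1; funext z
        rw [Real.logb]
        ring
      have hK2 : ∑ z, Q z * Real.logb 2 (Q z / p z) = K / Real.log 2 := by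
        rw [hKdef, Finset.sum_div]
        congr 1; funext z
        rw [Real.logb]
        ring
      have hK20 : 0 ≤ K / Real.log 2 := div_nonneg hK0 hlog2.le
      have hreal : D / Real.log 2 ≤
          ((N : ℝ) * Real.logb 2 μ⁻¹ * Real.sqrt (2 * Real.log 2)) *
            Real.sqrt (K / Real.log 2) := by
        have hsq : Real.sqrt (2 * Real.log 2) * Real.sqrt (K / Real.log 2)
            = Real.sqrt (2 * K) := by
          rw [← Real.sqrt_mul (by positivity)]
          congr 1
          field_simp
        have hrhs : ((N : ℝ) * Real.logb 2 μ⁻¹ * Real.sqrt (2 * Real.log 2)) *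
            Real.sqrt (K / Real.log 2)
            = ((-Real.log m) * Real.sqrt (2 * K)) / Real.log 2 := by
          rw [Real.logb, hL, ← hsq]
          ring
        rw [hrhs]
        exact div_le_div_of_nonneg_right hDle hlog2.le
      -- ENNReal assembly
      rw [klDiv, klDiv, if_pos hQcond, if_pos (fun x hx => absurd hx (hzero x))]
      rw [hS, hK2]
      rw [ENNReal.ofReal_rpow_of_nonneg hK20 (by norm_num)]
      rw [← Real.sqrt_eq_rpow]
      rw [← ENNReal.ofReal_mul (by positivity)]
      exact ENNReal.ofReal_le_ofReal hreal
end

section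
/- Let 𝒱 and 𝒳 be finite nonempty sets, N ≥ 1, and let q be a joint pmf of (U^{1:N}, X) on 𝒱^N × 𝒳. Let δ > 0 and let F₁, S ⊆ {1, …, N} be disjoint sets such that H(U^j | U^{1:j−1}) ≤ δ for every j ∈ F₁ and H(U^j | U^{1:j−1} X) > log₂|𝒱| − δ for every j ∈ S (conditional entropies under q). Define the joint pmf p̃ on 𝒱^N × 𝒳 by p̃(u^{1:N}, x) = q_X(x) · ∏_{j∈F₁} q_{U^j|U^{1:j−1}}(u^j | u^{1:j−1}) · ∏_{j∈S} |𝒱|^{−1} · ∏_{j∉F₁∪S} q_{U^j|U^{1:j−1}X}(u^j | u^{1:j−1}, x). Then D(q ‖ p̃) ≤ |S| δ + |F₁| δ ≤ N δ. (Core computation of Lemma 12 (Lemma lemstrongcoord2) of the paper, which analyzes the conditional-resolvability-achieving polar encoder for strong coordination.) -/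
open scoped ENNReal BigOperators

attribute [local instance] Classical.propDecidable

/-- Variational distance between two pmfs. -/
noncomputable def varDist {α : Type*} [Fintype α] (p q : α → ℝ) : ℝ :=
  ∑ x, |p x - q x|

/-- `𝒳`-marginal of a joint pmf `q` of `(U^{1:N}, X)`. -/
noncomputable def margX {𝒱 𝒳 : Type*} [Fintype 𝒱] [Fintype 𝒳] {N : ℕ}
    (q : (Fin N → 𝒱) × 𝒳 → ℝ) (x : 𝒳) : ℝ :=
  ∑ u, q (u, x)

/-- Probability, under `q`, that the `U`-coordinates strictly before `j`
agree with `u` (marginally over `X`). -/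
noncomputable def prefLTU {𝒱 𝒳 : Type*} [Fintype 𝒱] [Fintype 𝒳] [DecidableEq 𝒱] {N : ℕ}
    (q : (Fin N → 𝒱) × 𝒳 → ℝ) (j : Fin N) (u : Fin N → 𝒱) : ℝ :=
  ∑ z : (Fin N → 𝒱) × 𝒳, if ∀ l, l < j → z.1 l = u l then q z else 0

/-- Probability, under `q`, that the `U`-coordinates up to and including `j`
agree with `u` (marginally over `X`). -/
noncomputable def prefLEU {𝒱 𝒳 : Type*} [Fintype 𝒱] [Fintype 𝒳] [DecidableEq 𝒱] {N : ℕ}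
    (q : (Fin N → 𝒱) × 𝒳 → ℝ) (j : Fin N) (u : Fin N → 𝒱) : ℝ :=
  ∑ z : (Fin N → 𝒱) × 𝒳, if ∀ l, l ≤ j → z.1 l = u l then q z else 0

/-- Conditional probability `q_{U^j|U^{1:j−1}}(u^j|u^{1:j−1})`, with the uniform
distribution chosen for conditioning values of probability zero. -/
noncomputable def condProbU {𝒱 𝒳 : Type*} [Fintype 𝒱] [Fintype 𝒳] [DecidableEq 𝒱] {N : ℕ}
    (q : (Fin N → 𝒱) × 𝒳 → ℝ) (j : Fin N) (u : Fin N → 𝒱) : ℝ :=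
  if prefLTU q j u = 0 then (Fintype.card 𝒱 : ℝ)⁻¹ else prefLEU q j u / prefLTU q j u

/-- Probability, under `q`, that the `U`-coordinates strictly before `j` agree
with `u` and the `X`-coordinate equals `x`. -/
noncomputable def prefLTUX {𝒱 𝒳 : Type*} [Fintype 𝒱] [Fintype 𝒳] [DecidableEq 𝒱] [DecidableEq 𝒳] {N : ℕ}
    (q : (Fin N → 𝒱) × 𝒳 → ℝ) (j : Fin N) (u : Fin N → 𝒱) (x : 𝒳) : ℝ :=
  ∑ z : (Fin N → 𝒱) × 𝒳, if (∀ l, l < j → z.1 l = u l) ∧ z.2 = x then q z else 0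

/-- Probability, under `q`, that the `U`-coordinates up to and including `j`
agree with `u` and the `X`-coordinate equals `x`. -/
noncomputable def prefLEUX {𝒱 𝒳 : Type*} [Fintype 𝒱] [Fintype 𝒳] [DecidableEq 𝒱] [DecidableEq 𝒳] {N : ℕ}
    (q : (Fin N → 𝒱) × 𝒳 → ℝ) (j : Fin N) (u : Fin N → 𝒱) (x : 𝒳) : ℝ :=
  ∑ z : (Fin N → 𝒱) × 𝒳, if (∀ l, l ≤ j → z.1 l = u l) ∧ z.2 = x then q z else 0

/-- Conditional probability `q_{U^j|U^{1:j−1} X}(u^j|u^{1:j−1}, x)`, with the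
uniform distribution chosen for conditioning values of probability zero. -/
noncomputable def condProbUX {𝒱 𝒳 : Type*} [Fintype 𝒱] [Fintype 𝒳] [DecidableEq 𝒱] [DecidableEq 𝒳] {N : ℕ}
    (q : (Fin N → 𝒱) × 𝒳 → ℝ) (j : Fin N) (u : Fin N → 𝒱) (x : 𝒳) : ℝ :=
  if prefLTUX q j u x = 0 then (Fintype.card 𝒱 : ℝ)⁻¹
  else prefLEUX q j u x / prefLTUX q j u x

/-- Conditional Shannon entropy `H(U^j | U^{1:j−1})` under `q`. -/
noncomputable def condEntU {𝒱 𝒳 : Type*} [Fintype 𝒱] [Fintype 𝒳] [DecidableEq 𝒱] {N : ℕ}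
    (q : (Fin N → 𝒱) × 𝒳 → ℝ) (j : Fin N) : ℝ :=
  -∑ z : (Fin N → 𝒱) × 𝒳, q z * Real.logb 2 (condProbU q j z.1)

/-- Conditional Shannon entropy `H(U^j | U^{1:j−1} X)` under `q`. -/
noncomputable def condEntUX {𝒱 𝒳 : Type*} [Fintype 𝒱] [Fintype 𝒳] [DecidableEq 𝒱] [DecidableEq 𝒳] {N : ℕ}
    (q : (Fin N → 𝒱) × 𝒳 → ℝ) (j : Fin N) : ℝ :=
  -∑ z : (Fin N → 𝒱) × 𝒳, q z * Real.logb 2 (condProbUX q j z.1 z.2)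

/-- The polar-encoder joint pmf `p̃(u^{1:N}, x)` for conditional resolvability:
`X` keeps its marginal; positions in `F₁` are drawn from the conditionals given
the past `U`'s only, positions in `S` are uniform, and the remaining positions
are drawn from the conditionals given the past `U`'s and `X`. -/
noncomputable def ptilde {𝒱 𝒳 : Type*} [Fintype 𝒱] [Fintype 𝒳] [DecidableEq 𝒱] [DecidableEq 𝒳] {N : ℕ}
    (q : (Fin N → 𝒱) × 𝒳 → ℝ) (F₁ S : Finset (Fin N)) : (Fin N → 𝒱) × 𝒳 → ℝ :=
  fun z => margX q z.2 * ∏ j : Fin N,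
    (if j ∈ F₁ then condProbU q j z.1
     else if j ∈ S then (Fintype.card 𝒱 : ℝ)⁻¹
     else condProbUX q j z.1 z.2)

section Aux

variable {𝒱 𝒳 : Type*} [Fintype 𝒱] [Fintype 𝒳] [DecidableEq 𝒱] [DecidableEq 𝒳] {N : ℕ}

/-- Prefix probability indexed by a natural number. -/
noncomputable def Pf (q : (Fin N → 𝒱) × 𝒳 → ℝ) (u : Fin N → 𝒱) (x : 𝒳) (k : ℕ) : ℝ :=
  ∑ z : (Fin N → 𝒱) × 𝒳, if (∀ l : Fin N, (l : ℕ) < k → z.1 l = u l) ∧ z.2 = x then q z else 0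

lemma Pf_anti (q : (Fin N → 𝒱) × 𝒳 → ℝ) (hq0 : ∀ z, 0 ≤ q z) (u : Fin N → 𝒱) (x : 𝒳)
    {k m : ℕ} (h : k ≤ m) : Pf q u x m ≤ Pf q u x k := by
  apply Finset.sum_le_sum
  intro z _
  split_ifs with h1 h2
  · exact le_refl _
  · exact absurd ⟨fun l hl => h1.1 l (lt_of_lt_of_le hl h), h1.2⟩ h2
  · exact hq0 z
  · exact le_refl _

lemma Pf_N (q : (Fin N → 𝒱) × 𝒳 → ℝ) (u : Fin N → 𝒱) (x : 𝒳) : Pf q u x N = q (u, x) := by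
  rw [Pf]
  rw [Finset.sum_eq_single_of_mem (u, x) (Finset.mem_univ _)]
  · rw [if_pos ⟨fun l _ => rfl, rfl⟩]
  · intro z _ hz
    rw [if_neg]
    rintro ⟨h1, h2⟩
    exact hz (Prod.ext (funext fun l => h1 l l.isLt) h2)

lemma Pf_zero (q : (Fin N → 𝒱) × 𝒳 → ℝ) (u : Fin N → 𝒱) (x : 𝒳) : Pf q u x 0 = margX q x := by
  rw [Pf, margX, Fintype.sum_prod_type]
  refine Finset.sum_congr rfl fun a _ => ?_
  simp

lemma prefLTUX_eq (q : (Fin N → 𝒱) × 𝒳 → ℝ) (j : Fin N) (u : Fin N → 𝒱) (x : 𝒳) :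
    prefLTUX q j u x = Pf q u x (j : ℕ) := by
  rw [prefLTUX, Pf]
  refine Finset.sum_congr rfl fun z _ => ?_
  refine if_congr (and_congr_left' ?_) rfl rfl
  exact forall_congr' fun l => imp_congr_left (by rw [Fin.lt_def])

lemma prefLEUX_eq (q : (Fin N → 𝒱) × 𝒳 → ℝ) (j : Fin N) (u : Fin N → 𝒱) (x : 𝒳) :
    prefLEUX q j u x = Pf q u x ((j : ℕ) + 1) := by
  rw [prefLEUX, Pf]
  refine Finset.sum_congr rfl fun z _ => ?_
  refine if_congr (and_congr_left' ?_) rfl rfl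
  exact forall_congr' fun l => imp_congr_left (by rw [Fin.le_def, Nat.lt_succ_iff])

lemma telescope (f : ℕ → ℝ) : ∀ n : ℕ, (∀ k, k ≤ n → f k ≠ 0) →
    ∏ i ∈ Finset.range n, (f (i + 1) / f i) = f n / f 0
  | 0, h => by simp [div_self (h 0 le_rfl)]
  | n + 1, h => by
    rw [Finset.prod_range_succ, telescope f n (fun k hk => h k (hk.trans (Nat.le_succ n)))]
    have h0 := h 0 (Nat.zero_le _)
    have hn := h n (Nat.le_succ n)
    field_simp

lemma margX_pos (q : (Fin N → 𝒱) × 𝒳 → ℝ) (hq0 : ∀ z, 0 ≤ q z) (u : Fin N → 𝒱) (x : 𝒳)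
    (hz : 0 < q (u, x)) : 0 < margX q x := by
  rw [margX]
  exact lt_of_lt_of_le hz (Finset.single_le_sum (fun v _ => hq0 (v, x)) (Finset.mem_univ u))

lemma chain (q : (Fin N → 𝒱) × 𝒳 → ℝ) (hq0 : ∀ z, 0 ≤ q z) (u : Fin N → 𝒱) (x : 𝒳)
    (hz : 0 < q (u, x)) :
    margX q x * ∏ j : Fin N, condProbUX q j u x = q (u, x) := by
  have hP : ∀ k, k ≤ N → 0 < Pf q u x k := fun k hk =>
    lt_of_lt_of_le hz ((Pf_N q u x) ▸ Pf_anti q hq0 u x hk)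
  have h1 : ∀ j : Fin N, condProbUX q j u x = Pf q u x ((j : ℕ) + 1) / Pf q u x (j : ℕ) := by
    intro j
    have hne : prefLTUX q j u x ≠ 0 := by
      rw [prefLTUX_eq]; exact (hP _ j.isLt.le).ne'
    rw [condProbUX, if_neg hne, prefLEUX_eq, prefLTUX_eq]
  rw [Finset.prod_congr rfl (fun j _ => h1 j)]
  rw [Fin.prod_univ_eq_prod_range (fun i => Pf q u x (i + 1) / Pf q u x i) N]
  rw [telescope _ N (fun k hk => (hP k hk).ne'), Pf_N, ← Pf_zero q u x]
  rw [mul_comm, div_mul_cancel₀ _ (hP 0 (Nat.zero_le N)).ne']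

lemma prefLTU_nonneg (q : (Fin N → 𝒱) × 𝒳 → ℝ) (hq0 : ∀ z, 0 ≤ q z) (j : Fin N)
    (u : Fin N → 𝒱) : 0 ≤ prefLTU q j u := by
  apply Finset.sum_nonneg
  intro z _
  split_ifs
  · exact hq0 z
  · exact le_refl _

lemma prefLTUX_nonneg (q : (Fin N → 𝒱) × 𝒳 → ℝ) (hq0 : ∀ z, 0 ≤ q z) (j : Fin N)
    (u : Fin N → 𝒱) (x : 𝒳) : 0 ≤ prefLTUX q j u x := by
  apply Finset.sum_nonneg
  intro z _
  split_ifs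
  · exact hq0 z
  · exact le_refl _

lemma q_le_prefLEU (q : (Fin N → 𝒱) × 𝒳 → ℝ) (hq0 : ∀ z, 0 ≤ q z) (j : Fin N)
    (u : Fin N → 𝒱) (x : 𝒳) : q (u, x) ≤ prefLEU q j u := by
  rw [prefLEU]
  calc q (u, x) = if ∀ l, l ≤ j → (u, x).1 l = u l then q (u, x) else 0 := by
        rw [if_pos (fun _ _ => rfl)]
    _ ≤ _ := Finset.single_le_sum
        (f := fun z : (Fin N → 𝒱) × 𝒳 => if ∀ l, l ≤ j → z.1 l = u l then q z else 0)
        (fun z _ => by split_ifs <;> simp [hq0 z]) (Finset.mem_univ (u, x))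

lemma q_le_prefLEUX (q : (Fin N → 𝒱) × 𝒳 → ℝ) (hq0 : ∀ z, 0 ≤ q z) (j : Fin N)
    (u : Fin N → 𝒱) (x : 𝒳) : q (u, x) ≤ prefLEUX q j u x := by
  rw [prefLEUX]
  calc q (u, x) = if (∀ l, l ≤ j → (u, x).1 l = u l) ∧ (u, x).2 = x then q (u, x) else 0 := by
        rw [if_pos ⟨fun _ _ => rfl, rfl⟩]
    _ ≤ _ := Finset.single_le_sum
        (f := fun z : (Fin N → 𝒱) × 𝒳 =>
          if (∀ l, l ≤ j → z.1 l = u l) ∧ z.2 = x then q z else 0)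
        (fun z _ => by split_ifs <;> simp [hq0 z]) (Finset.mem_univ (u, x))

lemma prefLE_le_LT (q : (Fin N → 𝒱) × 𝒳 → ℝ) (hq0 : ∀ z, 0 ≤ q z) (j : Fin N)
    (u : Fin N → 𝒱) : prefLEU q j u ≤ prefLTU q j u := by
  apply Finset.sum_le_sum
  intro z _
  split_ifs with h1 h2
  · exact le_refl _
  · exact absurd (fun l hl => h1 l hl.le) h2
  · exact hq0 z
  · exact le_refl _

lemma prefLEX_le_LTX (q : (Fin N → 𝒱) × 𝒳 → ℝ) (hq0 : ∀ z, 0 ≤ q z) (j : Fin N)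
    (u : Fin N → 𝒱) (x : 𝒳) : prefLEUX q j u x ≤ prefLTUX q j u x := by
  apply Finset.sum_le_sum
  intro z _
  split_ifs with h1 h2
  · exact le_refl _
  · exact absurd ⟨fun l hl => h1.1 l hl.le, h1.2⟩ h2
  · exact hq0 z
  · exact le_refl _

variable [Nonempty 𝒱]

lemma cardV_pos : (0 : ℝ) < Fintype.card 𝒱 := by exact_mod_cast Fintype.card_pos

lemma condProbU_pos (q : (Fin N → 𝒱) × 𝒳 → ℝ) (hq0 : ∀ z, 0 ≤ q z) (j : Fin N)
    (u : Fin N → 𝒱) (x : 𝒳) (hz : 0 < q (u, x)) : 0 < condProbU q j u := by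
  rw [condProbU]
  split_ifs with h
  · exact inv_pos.mpr (cardV_pos (𝒱 := 𝒱))
  · exact div_pos (lt_of_lt_of_le hz (q_le_prefLEU q hq0 j u x))
      (lt_of_le_of_ne (prefLTU_nonneg q hq0 j u) (Ne.symm h))

lemma condProbUX_pos (q : (Fin N → 𝒱) × 𝒳 → ℝ) (hq0 : ∀ z, 0 ≤ q z) (j : Fin N)
    (u : Fin N → 𝒱) (x : 𝒳) (hz : 0 < q (u, x)) : 0 < condProbUX q j u x := by
  rw [condProbUX]
  split_ifs with h
  · exact inv_pos.mpr (cardV_pos (𝒱 := 𝒱))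
  · exact div_pos (lt_of_lt_of_le hz (q_le_prefLEUX q hq0 j u x))
      (lt_of_le_of_ne (prefLTUX_nonneg q hq0 j u x) (Ne.symm h))

lemma condProbUX_le_one (q : (Fin N → 𝒱) × 𝒳 → ℝ) (hq0 : ∀ z, 0 ≤ q z) (j : Fin N)
    (u : Fin N → 𝒱) (x : 𝒳) : condProbUX q j u x ≤ 1 := by
  rw [condProbUX]
  split_ifs with h
  · have h1 : (1 : ℝ) ≤ Fintype.card 𝒱 := by exact_mod_cast Fintype.card_pos
    rw [← inv_one]
    exact inv_anti₀ one_pos h1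
  · apply div_le_one_of_le₀ (prefLEX_le_LTX q hq0 j u x) (prefLTUX_nonneg q hq0 j u x)

lemma condEntUX_nonneg (q : (Fin N → 𝒱) × 𝒳 → ℝ) (hq0 : ∀ z, 0 ≤ q z) (j : Fin N) :
    0 ≤ condEntUX q j := by
  rw [condEntUX, neg_nonneg]
  apply Finset.sum_nonpos
  intro z _
  rcases (hq0 z).eq_or_lt with h | h
  · rw [← h, zero_mul]
  · have h1 : 0 < condProbUX q j z.1 z.2 := condProbUX_pos q hq0 j z.1 z.2 h
    have h2 : condProbUX q j z.1 z.2 ≤ 1 := condProbUX_le_one q hq0 j z.1 z.2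
    have := Real.logb_nonpos (b := 2) one_lt_two h1.le h2
    nlinarith

lemma ptilde_pos (q : (Fin N → 𝒱) × 𝒳 → ℝ) (hq0 : ∀ z, 0 ≤ q z) (F₁ S : Finset (Fin N))
    (z : (Fin N → 𝒱) × 𝒳) (hz : 0 < q z) : 0 < ptilde q F₁ S z := by
  rw [ptilde]
  apply mul_pos (margX_pos q hq0 z.1 z.2 hz)
  apply Finset.prod_pos
  intro j _
  split_ifs
  · exact condProbU_pos q hq0 j z.1 z.2 hz
  · exact inv_pos.mpr (cardV_pos (𝒱 := 𝒱))
  · exact condProbUX_pos q hq0 j z.1 z.2 hz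

end Aux
/-- Core computation of Lemma 12 (lemstrongcoord2): for the conditional-
resolvability polar encoder, `D(q‖p̃) ≤ |S| δ + |F₁| δ ≤ N δ`. -/
theorem klDiv_cond_resolvability_encoder
    {𝒱 𝒳 : Type*} [Fintype 𝒱] [Fintype 𝒳] [DecidableEq 𝒱] [DecidableEq 𝒳]
    [Nonempty 𝒱] [Nonempty 𝒳] {N : ℕ} (hN : 1 ≤ N)
    (q : (Fin N → 𝒱) × 𝒳 → ℝ) (hq : IsPMF q) (δ : ℝ) (hδ : 0 < δ)
    (F₁ S : Finset (Fin N)) (hdisj : Disjoint F₁ S)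
    (hF₁ : ∀ j ∈ F₁, condEntU q j ≤ δ)
    (hS : ∀ j ∈ S, Real.logb 2 (Fintype.card 𝒱) - δ < condEntUX q j) :
    klDiv q (ptilde q F₁ S) ≤
        ENNReal.ofReal ((S.card : ℝ) * δ + (F₁.card : ℝ) * δ) ∧
      (S.card : ℝ) * δ + (F₁.card : ℝ) * δ ≤ (N : ℝ) * δ := by
  obtain ⟨hq0, hq1⟩ := hq
  have hcard : (0 : ℝ) < Fintype.card 𝒱 := by exact_mod_cast Fintype.card_pos
  have key : ∑ z : (Fin N → 𝒱) × 𝒳, q z * Real.logb 2 (q z / ptilde q F₁ S z)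
      = ∑ j ∈ F₁, (condEntU q j - condEntUX q j)
        + ∑ j ∈ S, (Real.logb 2 (Fintype.card 𝒱) - condEntUX q j) := by
    have step : ∀ z : (Fin N → 𝒱) × 𝒳, q z * Real.logb 2 (q z / ptilde q F₁ S z)
        = (∑ j ∈ F₁, q z * (Real.logb 2 (condProbUX q j z.1 z.2)
              - Real.logb 2 (condProbU q j z.1)))
          + ∑ j ∈ S, q z * (Real.logb 2 (Fintype.card 𝒱)
              + Real.logb 2 (condProbUX q j z.1 z.2)) := by
      intro z
      rcases (hq0 z).eq_or_lt with h | h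
      · simp [← h]
      · have hm : 0 < margX q z.2 := margX_pos q hq0 z.1 z.2 h
        have hux : ∀ j, 0 < condProbUX q j z.1 z.2 :=
          fun j => condProbUX_pos q hq0 j z.1 z.2 h
        have hu : ∀ j, 0 < condProbU q j z.1 :=
          fun j => condProbU_pos q hq0 j z.1 z.2 h
        set f : Fin N → ℝ := fun j =>
          if j ∈ F₁ then condProbU q j z.1
          else if j ∈ S then (Fintype.card 𝒱 : ℝ)⁻¹
          else condProbUX q j z.1 z.2 with hf
        have hfpos : ∀ j, 0 < f j := by
          intro j; rw [hf]; dsimp only; split_ifs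
          · exact hu j
          · exact inv_pos.mpr hcard
          · exact hux j
        have hqz : q z = margX q z.2 * ∏ j : Fin N, condProbUX q j z.1 z.2 :=
          (chain q hq0 z.1 z.2 h).symm
        have hpt : ptilde q F₁ S z = margX q z.2 * ∏ j : Fin N, f j := rfl
        have hratio : q z / ptilde q F₁ S z
            = ∏ j : Fin N, (condProbUX q j z.1 z.2 / f j) := by
          rw [hpt, hqz, mul_div_mul_left _ _ hm.ne', ← Finset.prod_div_distrib]
        have hlog : Real.logb 2 (q z / ptilde q F₁ S z)
            = ∑ j : Fin N, Real.logb 2 (condProbUX q j z.1 z.2 / f j) := by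
          rw [hratio]
          exact Real.logb_prod _ _ (fun j _ => (div_pos (hux j) (hfpos j)).ne')
        have hsplit : ∑ j : Fin N, Real.logb 2 (condProbUX q j z.1 z.2 / f j)
            = ∑ j ∈ F₁ ∪ S, Real.logb 2 (condProbUX q j z.1 z.2 / f j) := by
          symm
          apply Finset.sum_subset (Finset.subset_univ _)
          intro j _ hj
          have hj1 : j ∉ F₁ := fun h' => hj (Finset.mem_union_left _ h')
          have hj2 : j ∉ S := fun h' => hj (Finset.mem_union_right _ h')
          rw [hf]; dsimp only
          rw [if_neg hj1, if_neg hj2, div_self (hux j).ne', Real.logb_one]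
        have hFterm : ∀ j ∈ F₁, Real.logb 2 (condProbUX q j z.1 z.2 / f j)
            = Real.logb 2 (condProbUX q j z.1 z.2) - Real.logb 2 (condProbU q j z.1) := by
          intro j hj
          rw [hf]; dsimp only
          rw [if_pos hj, Real.logb_div (hux j).ne' (hu j).ne']
        have hSterm : ∀ j ∈ S, Real.logb 2 (condProbUX q j z.1 z.2 / f j)
            = Real.logb 2 (Fintype.card 𝒱) + Real.logb 2 (condProbUX q j z.1 z.2) := by
          intro j hj
          have hj1 : j ∉ F₁ := fun h' => Finset.disjoint_left.mp hdisj h' hj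
          rw [hf]; dsimp only
          rw [if_neg hj1, if_pos hj, div_inv_eq_mul,
            Real.logb_mul (hux j).ne' hcard.ne', add_comm]
        rw [hlog, hsplit, Finset.sum_union hdisj, Finset.sum_congr rfl hFterm,
          Finset.sum_congr rfl hSterm, mul_add, Finset.mul_sum, Finset.mul_sum]
    rw [Finset.sum_congr rfl (fun z _ => step z), Finset.sum_add_distrib,
      Finset.sum_comm, Finset.sum_comm (s := Finset.univ) (t := S)]
    congr 1
    · refine Finset.sum_congr rfl fun j _ => ?_
      rw [condEntU, condEntUX]
      simp only [mul_sub]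
      rw [Finset.sum_sub_distrib]
      ring
    · refine Finset.sum_congr rfl fun j _ => ?_
      rw [condEntUX]
      simp only [mul_add]
      rw [Finset.sum_add_distrib]
      have h1 : ∑ z : (Fin N → 𝒱) × 𝒳, q z * Real.logb 2 (Fintype.card 𝒱)
          = Real.logb 2 (Fintype.card 𝒱) := by
        rw [← Finset.sum_mul, hq1, one_mul]
      rw [h1]; ring
  have hEnt : ∀ j, 0 ≤ condEntUX q j := fun j => condEntUX_nonneg q hq0 j
  have hbound : ∑ z : (Fin N → 𝒱) × 𝒳, q z * Real.logb 2 (q z / ptilde q F₁ S z)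
      ≤ (S.card : ℝ) * δ + (F₁.card : ℝ) * δ := by
    rw [key]
    have h1 : ∑ j ∈ F₁, (condEntU q j - condEntUX q j) ≤ (F₁.card : ℝ) * δ := by
      calc ∑ j ∈ F₁, (condEntU q j - condEntUX q j) ≤ ∑ _j ∈ F₁, δ :=
            Finset.sum_le_sum (fun j hj => by have := hF₁ j hj; have := hEnt j; linarith)
        _ = (F₁.card : ℝ) * δ := by rw [Finset.sum_const, nsmul_eq_mul]
    have h2 : ∑ j ∈ S, (Real.logb 2 (Fintype.card 𝒱) - condEntUX q j) ≤ (S.card : ℝ) * δ := by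
      calc ∑ j ∈ S, (Real.logb 2 (Fintype.card 𝒱) - condEntUX q j) ≤ ∑ _j ∈ S, δ :=
            Finset.sum_le_sum (fun j hj => by have := hS j hj; linarith)
        _ = (S.card : ℝ) * δ := by rw [Finset.sum_const, nsmul_eq_mul]
    linarith
  constructor
  · rw [klDiv, if_pos]
    · exact ENNReal.ofReal_le_ofReal hbound
    · intro z hz
      by_contra hq'
      have hpos : 0 < q z := lt_of_le_of_ne (hq0 z) (Ne.symm hq')
      exact absurd hz (ptilde_pos q hq0 F₁ S z hpos).ne'
  · have hcardle : S.card + F₁.card ≤ N := by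
      have h1 : (S ∪ F₁).card = S.card + F₁.card := Finset.card_union_of_disjoint hdisj.symm
      have h2 : (S ∪ F₁).card ≤ Fintype.card (Fin N) := Finset.card_le_univ _
      rw [Fintype.card_fin] at h2
      omega
    have hcast : (S.card : ℝ) + (F₁.card : ℝ) ≤ (N : ℝ) := by exact_mod_cast hcardle
    nlinarith
end
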